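/- Let n > 1 be an integer, let W be a random variable taking values in {1, …, n}, and suppose there are constants ε ≥ 0 and δ > 0 such that P(W = k) ≤ 2ε + 2δk for all k ∈ {1, …, n}. Then: (a) n·E[W^{−1}] − 1/2 ≤ 5·n·log(n)·ε + 3·n·√δ; and (b) for every real t > 0, E[(1 − W/n)^{⌈nt⌉}] ≤ 2(ε/t + δ/t²). -/

import Mathlib

open Finset


lemma aux_regroup {Ω : Type*} [Fintype Ω] (w : Ω → ℝ) (n : ℕ) (W : Ω → ℕ)
    (hW : ∀ ω, W ω ∈ Finset.Icc 1 n) (g : ℕ → ℝ) :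
    ∑ ω, w ω * g (W ω)
      = ∑ k ∈ Finset.Icc 1 n, (∑ ω, if W ω = k then w ω else 0) * g k := by
  have h : ∀ ω, w ω * g (W ω)
      = ∑ k ∈ Finset.Icc 1 n, if W ω = k then w ω * g k else 0 := by
    intro ω
    rw [Finset.sum_ite_eq, if_pos (hW ω)]
  simp_rw [h]
  rw [Finset.sum_comm]
  refine Finset.sum_congr rfl fun k _ => ?_
  rw [Finset.sum_mul]
  refine Finset.sum_congr rfl fun ω _ => ?_
  split
  · rfl
  · rw [zero_mul]

lemma aux_geom1 (r : ℝ) (n : ℕ) :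
    (1 - r) * ∑ k ∈ Finset.Icc 1 n, r ^ k = r - r ^ (n + 1) := by
  induction n with
  | zero => simp
  | succ n ih =>
    rw [Finset.sum_Icc_succ_top (Nat.le_add_left 1 n), mul_add, ih]
    ring

lemma aux_geom2 (r : ℝ) (n : ℕ) :
    (1 - r) ^ 2 * ∑ k ∈ Finset.Icc 1 n, (k : ℝ) * r ^ k
      = r - ((n : ℝ) + 1) * r ^ (n + 1) + (n : ℝ) * r ^ (n + 2) := by
  induction n with
  | zero => simp
  | succ n ih =>
    rw [Finset.sum_Icc_succ_top (Nat.le_add_left 1 n), mul_add, ih]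
    push_cast
    ring

lemma aux_sum1_le (r : ℝ) (hr0 : 0 ≤ r) (hr1 : r < 1) (n : ℕ) :
    ∑ k ∈ Finset.Icc 1 n, r ^ k ≤ r / (1 - r) := by
  rw [le_div_iff₀ (by linarith), mul_comm, aux_geom1]
  have := pow_nonneg hr0 (n + 1)
  linarith

lemma aux_sum2_le (r : ℝ) (hr0 : 0 ≤ r) (hr1 : r < 1) (n : ℕ) :
    ∑ k ∈ Finset.Icc 1 n, (k : ℝ) * r ^ k ≤ r / (1 - r) ^ 2 := by
  rw [le_div_iff₀ (pow_pos (by linarith) 2), mul_comm, aux_geom2]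
  have h1 : (n : ℝ) * r ^ (n + 2) ≤ (n : ℝ) * r ^ (n + 1) := by
    apply mul_le_mul_of_nonneg_left _ (Nat.cast_nonneg n)
    apply pow_le_pow_of_le_one hr0 hr1.le
    omega
  have h2 : (n : ℝ) * r ^ (n + 1) ≤ ((n : ℝ) + 1) * r ^ (n + 1) := by
    apply mul_le_mul_of_nonneg_right (by linarith) (pow_nonneg hr0 _)
  linarith

lemma aux_exp1 (t : ℝ) (ht : 0 < t) :
    Real.exp (-t) / (1 - Real.exp (-t)) ≤ 1 / t := by
  have h1 : (1 : ℝ) < Real.exp t := Real.one_lt_exp_iff.mpr ht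
  have h2 : t + 1 ≤ Real.exp t := Real.add_one_le_exp t
  have key : Real.exp (-t) / (1 - Real.exp (-t)) = 1 / (Real.exp t - 1) := by
    rw [Real.exp_neg]
    rw [div_eq_div_iff]
    · field_simp
    · have : (Real.exp t)⁻¹ < 1 := by
        rw [inv_lt_one_iff₀]; right; exact h1
      linarith
    · linarith
  rw [key]
  apply one_div_le_one_div_of_le ht
  linarith

lemma aux_exp2 (t : ℝ) (ht : 0 < t) :
    Real.exp (-t) / (1 - Real.exp (-t)) ^ 2 ≤ 1 / t ^ 2 := by
  have h1 : (1 : ℝ) < Real.exp t := Real.one_lt_exp_iff.mpr ht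
  have hsinh : t / 2 < Real.sinh (t / 2) := Real.self_lt_sinh_iff.mpr (by linarith)
  rw [Real.sinh_eq] at hsinh
  have hkey : t * Real.exp (t / 2) ≤ Real.exp t - 1 := by
    have h3 : t < Real.exp (t / 2) - Real.exp (-(t / 2)) := by linarith
    have h4 : Real.exp (t / 2) * Real.exp (t / 2) = Real.exp t := by
      rw [← Real.exp_add]; ring_nf
    have h5 := mul_lt_mul_of_pos_right h3 (Real.exp_pos (t / 2))
    rw [sub_mul, h4, ← Real.exp_add] at h5
    simp at h5
    linarith
  have hsq : t ^ 2 * Real.exp t ≤ (Real.exp t - 1) ^ 2 := by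
    have := mul_self_le_mul_self (by positivity : (0:ℝ) ≤ t * Real.exp (t / 2)) hkey
    calc t ^ 2 * Real.exp t = (t * Real.exp (t / 2)) * (t * Real.exp (t / 2)) := by
          rw [show Real.exp t = Real.exp (t/2) * Real.exp (t/2) by rw [← Real.exp_add]; ring_nf]
          ring
      _ ≤ (Real.exp t - 1) * (Real.exp t - 1) := this
      _ = (Real.exp t - 1) ^ 2 := by ring
  have hepos := Real.exp_pos t
  have hne : Real.exp t ≠ 0 := hepos.ne'
  have hlt : Real.exp (-t) < 1 := Real.exp_lt_one_iff.mpr (by linarith)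
  have ha : (0:ℝ) < (1 - Real.exp (-t)) ^ 2 := pow_pos (by linarith) 2
  have hb : (0:ℝ) < (Real.exp t - 1) ^ 2 := pow_pos (by linarith) 2
  have key : Real.exp (-t) / (1 - Real.exp (-t)) ^ 2 = Real.exp t / (Real.exp t - 1) ^ 2 := by
    rw [div_eq_div_iff ha.ne' hb.ne', Real.exp_neg]
    field_simp
  rw [key, div_le_div_iff₀ hb (pow_pos ht 2)]
  nlinarith

lemma aux_harm (m : ℕ) :
    ∑ k ∈ Finset.Icc 1 m, ((k : ℝ))⁻¹ ≤ 1 + Real.log m := by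
  have h := harmonic_le_one_add_log m
  rw [harmonic_eq_sum_Icc] at h
  calc ∑ k ∈ Finset.Icc 1 m, ((k : ℝ))⁻¹
      = ((∑ i ∈ Finset.Icc 1 m, ((i : ℚ))⁻¹ : ℚ) : ℝ) := by push_cast; rfl
    _ ≤ 1 + Real.log m := h

lemma aux_point (n k N : ℕ) (t : ℝ) (ht : 0 < t) (hn : 0 < n) (hkn : k ≤ n)
    (hN : (n : ℝ) * t ≤ (N : ℝ)) :
    (1 - (k : ℝ) / n) ^ N ≤ Real.exp (-t) ^ k := by
  have hnpos : (0:ℝ) < n := by exact_mod_cast hn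
  have hb0 : (0:ℝ) ≤ 1 - (k : ℝ) / n := by
    rw [sub_nonneg, div_le_one hnpos]
    exact_mod_cast hkn
  have hb1 : (1:ℝ) - (k : ℝ) / n ≤ Real.exp (-((k : ℝ) / n)) := by
    have := Real.add_one_le_exp (-((k : ℝ) / n))
    linarith
  calc (1 - (k : ℝ) / n) ^ N ≤ (Real.exp (-((k : ℝ) / n))) ^ N :=
        pow_le_pow_left₀ hb0 hb1 N
    _ = Real.exp ((N : ℝ) * (-((k : ℝ) / n))) := (Real.exp_nat_mul _ N).symm
    _ ≤ Real.exp ((k : ℝ) * (-t)) := by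
        apply Real.exp_le_exp.mpr
        have hmul := mul_le_mul_of_nonneg_left hN
          (by positivity : (0:ℝ) ≤ (k : ℝ) / n)
        have heq : (k : ℝ) / n * ((n : ℝ) * t) = (k : ℝ) * t := by
          field_simp
        rw [heq] at hmul
        nlinarith [hmul]
    _ = Real.exp (-t) ^ k := by rw [← Real.exp_nat_mul]

set_option maxHeartbeats 1000000 in
/-- let n > 1 and let W be a random variable on a finite probability space
taking values in {1,…,n}, with P(W = k) ≤ 2ε + 2δk for all k ∈ {1,…,n}, where ε ≥ 0 and
δ > 0. Then (a) n·E[W⁻¹] − 1/2 ≤ 5n log(n) ε + 3n √δ, and (b) for every real t > 0,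
E[(1 − W/n)^{⌈nt⌉}] ≤ 2(ε/t + δ/t²). -/
theorem revealment_predictability_corollary (n : ℕ) (hn : 1 < n)
    (Ω : Type*) [Fintype Ω] (w : Ω → ℝ) (hw : ∀ ω, 0 ≤ w ω) (hw1 : ∑ ω, w ω = 1)
    (W : Ω → ℕ) (hW : ∀ ω, W ω ∈ Finset.Icc 1 n)
    (ε δ : ℝ) (hε : 0 ≤ ε) (hδ : 0 < δ)
    (hP : ∀ k ∈ Finset.Icc 1 n,
      (∑ ω, if W ω = k then w ω else 0) ≤ 2 * ε + 2 * δ * (k : ℝ)) :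
    (n : ℝ) * (∑ ω, w ω * ((W ω : ℝ))⁻¹) - 1 / 2
        ≤ 5 * (n : ℝ) * Real.log n * ε + 3 * (n : ℝ) * Real.sqrt δ
    ∧ ∀ t : ℝ, 0 < t →
        (∑ ω, w ω * (1 - (W ω : ℝ) / (n : ℝ)) ^ ⌈(n : ℝ) * t⌉₊)
          ≤ 2 * (ε / t + δ / t ^ 2) := by
  have hnpos : (0:ℝ) < n := by exact_mod_cast Nat.zero_lt_of_lt hn
  have hn2 : (2:ℝ) ≤ n := by exact_mod_cast hn
  have hlog2 : (2/3 : ℝ) ≤ Real.log n := by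
    have h1 : Real.log 2 ≤ Real.log n := by gcongr <;> norm_num
    nlinarith [Real.log_two_gt_d9]
  have hlogn0 : (0:ℝ) ≤ Real.log n := by linarith
  have hPnn : ∀ k : ℕ, (0:ℝ) ≤ ∑ ω, if W ω = k then w ω else 0 := by
    intro k
    refine Finset.sum_nonneg fun ω _ => ?_
    split
    · exact hw ω
    · exact le_rfl
  have hPsum : ∑ k ∈ Finset.Icc 1 n, (∑ ω, if W ω = k then w ω else 0) = 1 := by
    have h := aux_regroup w n W hW (fun _ => 1)
    simp only [mul_one] at h
    rw [← h, hw1]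
  constructor
  · -- part (a)
    have hEa : ∑ ω, w ω * ((W ω : ℝ))⁻¹
        = ∑ k ∈ Finset.Icc 1 n, (∑ ω, if W ω = k then w ω else 0) * ((k:ℝ))⁻¹ :=
      aux_regroup w n W hW (fun k => ((k:ℝ))⁻¹)
    by_cases hδ9 : (1:ℝ)/9 ≤ δ
    · -- large δ: trivial bound E ≤ 1 and 3√δ ≥ 1
      have hs : (1:ℝ)/3 ≤ Real.sqrt δ := by
        have : Real.sqrt (1/9) ≤ Real.sqrt δ := Real.sqrt_le_sqrt hδ9
        rwa [show (1:ℝ)/9 = (1/3)^2 by norm_num, Real.sqrt_sq (by norm_num)] at this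
      have hE1 : ∑ ω, w ω * ((W ω : ℝ))⁻¹ ≤ 1 := by
        rw [← hw1]
        refine Finset.sum_le_sum fun ω _ => ?_
        have h1 : (1:ℝ) ≤ (W ω : ℝ) := by
          exact_mod_cast (Finset.mem_Icc.mp (hW ω)).1
        calc w ω * ((W ω : ℝ))⁻¹ ≤ w ω * 1 :=
              mul_le_mul_of_nonneg_left (inv_le_one_of_one_le₀ h1) (hw ω)
          _ = w ω := mul_one _
      have h5 : (0:ℝ) ≤ 5 * n * Real.log n * ε := by positivity
      nlinarith [mul_le_mul_of_nonneg_left hE1 hnpos.le,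
        mul_le_mul_of_nonneg_left hs (by positivity : (0:ℝ) ≤ 3 * (n:ℝ))]
    · -- small δ
      push_neg at hδ9
      have hsd : 0 < Real.sqrt δ := Real.sqrt_pos.mpr hδ
      have hsd3 : Real.sqrt δ < 1/3 := by
        have : Real.sqrt δ < Real.sqrt (1/9) := Real.sqrt_lt_sqrt hδ.le hδ9
        rwa [show (1:ℝ)/9 = (1/3)^2 by norm_num, Real.sqrt_sq (by norm_num)] at this
      set m : ℕ := ⌊(Real.sqrt δ)⁻¹⌋₊ with hmdef
      have h3inv : (3:ℝ) ≤ (Real.sqrt δ)⁻¹ := by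
        rw [← one_div]
        rw [le_div_iff₀ hsd]
        nlinarith
      have hm3 : 3 ≤ m := Nat.le_floor (by exact_mod_cast h3inv)
      have hmle : (m:ℝ) ≤ (Real.sqrt δ)⁻¹ := Nat.floor_le (by positivity)
      have hmgt : (Real.sqrt δ)⁻¹ < (m:ℝ) + 1 := Nat.lt_floor_add_one _
      have hcancel : Real.sqrt δ * (Real.sqrt δ)⁻¹ = 1 := mul_inv_cancel₀ hsd.ne'
      have hsq : Real.sqrt δ * Real.sqrt δ = δ := Real.mul_self_sqrt hδ.le
      have hδm : δ * m ≤ Real.sqrt δ := by nlinarith [mul_le_mul_of_nonneg_left hmle hsd.le]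
      have hinv : ∀ k : ℕ, m + 1 ≤ k → ((k:ℝ))⁻¹ ≤ Real.sqrt δ := by
        intro k hk
        have hk1 : (Real.sqrt δ)⁻¹ < (k:ℝ) := lt_of_lt_of_le hmgt (by exact_mod_cast hk)
        have h := one_div_le_one_div_of_le (by positivity : (0:ℝ) < (Real.sqrt δ)⁻¹) hk1.le
        rwa [one_div, one_div, inv_inv] at h
      set m' : ℕ := min m n with hm'def
      have hm'n : m' ≤ n := min_le_right _ _
      have hm'1 : 1 ≤ m' := by omega
      have hm'm : (m':ℝ) ≤ (m:ℝ) := by exact_mod_cast min_le_left m n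
      have hsplit : ∑ k ∈ Finset.Icc 1 n, (∑ ω, if W ω = k then w ω else 0) * ((k:ℝ))⁻¹
          = (∑ k ∈ Finset.Icc 1 m', (∑ ω, if W ω = k then w ω else 0) * ((k:ℝ))⁻¹)
            + ∑ k ∈ Finset.Ioc m' n, (∑ ω, if W ω = k then w ω else 0) * ((k:ℝ))⁻¹ := by
        have e1 : Finset.Icc 1 n = Finset.Ioc 0 n := Finset.Icc_add_one_left_eq_Ioc 0 n
        have e2 : Finset.Icc 1 m' = Finset.Ioc 0 m' := Finset.Icc_add_one_left_eq_Ioc 0 m'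
        rw [e1, e2]
        exact (Finset.sum_Ioc_consecutive
          (f := fun k : ℕ => (∑ ω, if W ω = k then w ω else 0) * ((k:ℝ))⁻¹)
          (Nat.zero_le m') hm'n).symm
      have hA : ∑ k ∈ Finset.Icc 1 m', (∑ ω, if W ω = k then w ω else 0) * ((k:ℝ))⁻¹
          ≤ 2 * ε * (1 + Real.log n) + 2 * Real.sqrt δ := by
        calc ∑ k ∈ Finset.Icc 1 m', (∑ ω, if W ω = k then w ω else 0) * ((k:ℝ))⁻¹
            ≤ ∑ k ∈ Finset.Icc 1 m', (2 * ε * ((k:ℝ))⁻¹ + 2 * δ) := by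
              refine Finset.sum_le_sum fun k hk => ?_
              obtain ⟨hk1, hk2⟩ := Finset.mem_Icc.mp hk
              have hkmem : k ∈ Finset.Icc 1 n := Finset.mem_Icc.mpr ⟨hk1, le_trans hk2 hm'n⟩
              have hkne : ((k:ℝ)) ≠ 0 := by positivity
              have := mul_le_mul_of_nonneg_right (hP k hkmem)
                (inv_nonneg.mpr (Nat.cast_nonneg k) : (0:ℝ) ≤ ((k:ℝ))⁻¹)
              calc (∑ ω, if W ω = k then w ω else 0) * ((k:ℝ))⁻¹
                  ≤ (2 * ε + 2 * δ * k) * ((k:ℝ))⁻¹ := this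
                _ = 2 * ε * ((k:ℝ))⁻¹ + 2 * δ := by field_simp
          _ = 2 * ε * (∑ k ∈ Finset.Icc 1 m', ((k:ℝ))⁻¹) + 2 * δ * m' := by
              rw [Finset.sum_add_distrib, ← Finset.mul_sum, Finset.sum_const, Nat.card_Icc]
              simp [mul_comm]
          _ ≤ 2 * ε * (1 + Real.log n) + 2 * Real.sqrt δ := by
              have hharm : ∑ k ∈ Finset.Icc 1 m', ((k:ℝ))⁻¹ ≤ 1 + Real.log m' := aux_harm m'
              have hm'pos : (0:ℝ) < (m':ℝ) := by exact_mod_cast hm'1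
              have hlogm' : Real.log m' ≤ Real.log n :=
                Real.log_le_log hm'pos (by exact_mod_cast hm'n)
              have h2δm' : 2 * δ * (m':ℝ) ≤ 2 * Real.sqrt δ := by nlinarith
              have hh2 : ∑ k ∈ Finset.Icc 1 m', ((k:ℝ))⁻¹ ≤ 1 + Real.log n := by
                linarith
              have hmono : 2 * ε * (∑ k ∈ Finset.Icc 1 m', ((k:ℝ))⁻¹)
                  ≤ 2 * ε * (1 + Real.log n) :=
                mul_le_mul_of_nonneg_left hh2 (by positivity)
              linarith
      have hB : ∑ k ∈ Finset.Ioc m' n, (∑ ω, if W ω = k then w ω else 0) * ((k:ℝ))⁻¹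
          ≤ Real.sqrt δ := by
        calc ∑ k ∈ Finset.Ioc m' n, (∑ ω, if W ω = k then w ω else 0) * ((k:ℝ))⁻¹
            ≤ ∑ k ∈ Finset.Ioc m' n, (∑ ω, if W ω = k then w ω else 0) * Real.sqrt δ := by
              refine Finset.sum_le_sum fun k hk => ?_
              obtain ⟨hk1, hk2⟩ := Finset.mem_Ioc.mp hk
              have hkm : m + 1 ≤ k := by omega
              exact mul_le_mul_of_nonneg_left (hinv k hkm) (hPnn k)
          _ = (∑ k ∈ Finset.Ioc m' n, (∑ ω, if W ω = k then w ω else 0)) * Real.sqrt δ := by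
              rw [Finset.sum_mul]
          _ ≤ 1 * Real.sqrt δ := by
              refine mul_le_mul_of_nonneg_right ?_ hsd.le
              rw [← hPsum]
              refine Finset.sum_le_sum_of_subset_of_nonneg ?_ (fun k _ _ => hPnn k)
              intro k hk
              obtain ⟨hk1, hk2⟩ := Finset.mem_Ioc.mp hk
              exact Finset.mem_Icc.mpr ⟨by omega, hk2⟩
          _ = Real.sqrt δ := one_mul _
      have hE : ∑ ω, w ω * ((W ω : ℝ))⁻¹
          ≤ 2 * ε * (1 + Real.log n) + 3 * Real.sqrt δ := by
        rw [hEa, hsplit]; linarith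
      nlinarith [mul_le_mul_of_nonneg_left hE hnpos.le,
        mul_nonneg (mul_nonneg hnpos.le hε)
          (by linarith : (0:ℝ) ≤ 3 * Real.log n - 2)]
  · -- part (b)
    intro t ht
    set N : ℕ := ⌈(n:ℝ) * t⌉₊ with hNdef
    set r : ℝ := Real.exp (-t) with hrdef
    have hr0 : (0:ℝ) ≤ r := (Real.exp_pos _).le
    have hr1 : r < 1 := Real.exp_lt_one_iff.mpr (neg_lt_zero.mpr ht)
    have hpt : ∀ ω, w ω * (1 - (W ω : ℝ) / n) ^ N ≤ w ω * r ^ (W ω) := by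
      intro ω
      obtain ⟨hk1, hkn⟩ := Finset.mem_Icc.mp (hW ω)
      refine mul_le_mul_of_nonneg_left ?_ (hw ω)
      rw [hrdef]
      exact aux_point n (W ω) N t ht (by omega) hkn (Nat.le_ceil _)
    calc ∑ ω, w ω * (1 - (W ω : ℝ) / n) ^ N
        ≤ ∑ ω, w ω * r ^ (W ω) := Finset.sum_le_sum fun ω _ => hpt ω
      _ = ∑ k ∈ Finset.Icc 1 n, (∑ ω, if W ω = k then w ω else 0) * r ^ k :=
          aux_regroup w n W hW (fun k => r ^ k)
      _ ≤ ∑ k ∈ Finset.Icc 1 n, (2 * ε + 2 * δ * k) * r ^ k :=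
          Finset.sum_le_sum fun k hk =>
            mul_le_mul_of_nonneg_right (hP k hk) (pow_nonneg hr0 _)
      _ = 2 * ε * (∑ k ∈ Finset.Icc 1 n, r ^ k)
          + 2 * δ * (∑ k ∈ Finset.Icc 1 n, (k:ℝ) * r ^ k) := by
          rw [Finset.mul_sum, Finset.mul_sum, ← Finset.sum_add_distrib]
          refine Finset.sum_congr rfl fun k _ => ?_
          ring
      _ ≤ 2 * ε * (r / (1 - r)) + 2 * δ * (r / (1 - r) ^ 2) := by
          have h1 := aux_sum1_le r hr0 hr1 n
          have h2 := aux_sum2_le r hr0 hr1 n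
          have := mul_le_mul_of_nonneg_left h1 (by positivity : (0:ℝ) ≤ 2 * ε)
          have := mul_le_mul_of_nonneg_left h2 (by positivity : (0:ℝ) ≤ 2 * δ)
          linarith
      _ ≤ 2 * ε * (1 / t) + 2 * δ * (1 / t ^ 2) := by
          have h1 := aux_exp1 t ht
          have h2 := aux_exp2 t ht
          have := mul_le_mul_of_nonneg_left h1 (by positivity : (0:ℝ) ≤ 2 * ε)
          have := mul_le_mul_of_nonneg_left h2 (by positivity : (0:ℝ) ≤ 2 * δ)
          rw [hrdef]
          linarith
      _ = 2 * (ε / t + δ / t ^ 2) := by ring
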